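/- For all integers v ≥ 1 and n ≥ kv, the following identity of polynomials in x holds: Y_{n,β}^{(v)}(x;k,a,b) = (−1)^v·((n)_{kv}/(2^{kv}·a^{bv}))·ℰ_{n−kv}^{(v)}(x, −β^b/a^b), where ℰ^{(v)} denotes the Apostol–Euler polynomials of order v (the paper writes the prefactor as −1, which agrees with (−1)^v when v is odd). -/

import Mathlib

open Polynomial

/-- The exponential generating series `e^{xt} = ∑_{n≥0} xⁿ tⁿ/n!` as a formal power series
in `t` with coefficients in `ℂ[x]`. -/
noncomputable def expX : PowerSeries (Polynomial ℂ) :=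
  PowerSeries.mk fun n => (n.factorial : ℂ)⁻¹ • (Polynomial.X : Polynomial ℂ) ^ n

/-- The exponential generating series `∑_{n≥0} Y_n tⁿ/n!` of a family of polynomials. -/
noncomputable def egf (Y : ℕ → Polynomial ℂ) : PowerSeries (Polynomial ℂ) :=
  PowerSeries.mk fun n => (n.factorial : ℂ)⁻¹ • Y n

/-- The defining identity for the unified Apostol-type polynomials with general constants:
`(B·e^t − A)^v · ∑_{n≥0} Y_n tⁿ/n! = (2^{1−k} t^k)^v · e^{xt}` as formal power series in `t`
over `ℂ[x]`. -/
def ApostolFamilyC (k v : ℕ) (B A : ℂ) (Y : ℕ → Polynomial ℂ) : Prop :=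
  (PowerSeries.C (R := Polynomial ℂ) (Polynomial.C B) * PowerSeries.exp (Polynomial ℂ)
      - PowerSeries.C (R := Polynomial ℂ) (Polynomial.C A)) ^ v * egf Y
    = (PowerSeries.C (R := Polynomial ℂ) (Polynomial.C ((2 : ℂ) ^ ((1 : ℤ) - (k : ℤ)))) *
        PowerSeries.X ^ k) ^ v * expX

/-- `Y` is the family of unified Apostol-type polynomials `Y_{n,β}^{(v)}(x;k,a,b)`:
here `β^b = exp(b·Log β)` is the principal complex power and `a^b` the real power. -/
def ApostolFamily (k v : ℕ) (a b : ℝ) (β : ℂ) (Y : ℕ → Polynomial ℂ) : Prop :=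
  ApostolFamilyC k v (β ^ (b : ℂ)) (((a ^ b : ℝ) : ℂ)) Y

/-- The defining identity for the Apostol–Euler polynomials of order `v`:
`(λ·e^t + 1)^v · ∑_{n≥0} ℰ_n^{(v)}(x,λ) tⁿ/n! = 2^v·e^{xt}`. -/
def ApostolEulerFamily (v : ℕ) (lam : ℂ) (E : ℕ → Polynomial ℂ) : Prop :=
  (PowerSeries.C (R := Polynomial ℂ) (Polynomial.C lam) * PowerSeries.exp (Polynomial ℂ) + 1) ^ v *
      egf E
    = PowerSeries.C (R := Polynomial ℂ) (Polynomial.C ((2 : ℂ) ^ v)) * expX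

/-- For `v ≥ 1` and `n ≥ kv`:
`Y_{n,β}^{(v)}(x;k,a,b) = (−1)^v ((n)_{kv}/(2^{kv} a^{bv})) ℰ_{n−kv}^{(v)}(x, −β^b/a^b)`. -/
theorem apostol_eq_apostolEuler (k v : ℕ) (a b : ℝ) (β : ℂ)
    (ha : 0 < a) (hb : 0 < b) (hβ : β ≠ 0) (hv : 1 ≤ v)
    (Y E : ℕ → Polynomial ℂ)
    (hY : ApostolFamily k v a b β Y)
    (hE : ApostolEulerFamily v (-(β ^ (b : ℂ) / ((a ^ b : ℝ) : ℂ))) E)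
    (n : ℕ) (hn : k * v ≤ n) :
    Y n = Polynomial.C ((-1 : ℂ) ^ v * (n.descFactorial (k * v) : ℂ) /
        ((2 : ℂ) ^ (k * v) * ((a ^ b : ℝ) : ℂ) ^ v)) * E (n - k * v) := by
  have hA0 : (((a ^ b : ℝ) : ℂ)) ≠ 0 := by
    exact_mod_cast ne_of_gt (Real.rpow_pos_of_pos ha b)
  set A : ℂ := ((a ^ b : ℝ) : ℂ) with hAdef
  have hB0 : β ^ (b : ℂ) ≠ 0 := by
    simp [Complex.cpow_eq_zero_iff, hβ]
  set B : ℂ := β ^ (b : ℂ) with hBdef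
  set lam : ℂ := -(B / A) with hlamdef
  have hlam0 : lam ≠ 0 := by
    simp [hlamdef, _root_.div_eq_zero_iff, hB0, hA0]
  set P : PowerSeries (Polynomial ℂ) :=
    PowerSeries.C (R := Polynomial ℂ) (Polynomial.C lam) * PowerSeries.exp (Polynomial ℂ) + 1 with hPdef
  unfold ApostolFamily ApostolFamilyC at hY
  unfold ApostolEulerFamily at hE
  -- factor the Y-side
  have hfac : PowerSeries.C (R := Polynomial ℂ) (Polynomial.C B) * PowerSeries.exp (Polynomial ℂ)
      - PowerSeries.C (R := Polynomial ℂ) (Polynomial.C A)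
      = PowerSeries.C (R := Polynomial ℂ) (Polynomial.C (-A)) * P := by
    have h1 : (-A) * lam = B := by rw [hlamdef]; field_simp
    have h2 : Polynomial.C (-A) * Polynomial.C lam = Polynomial.C B := by
      rw [← map_mul, h1]
    rw [hPdef, mul_add, mul_one, ← mul_assoc, ← map_mul, h2, map_neg, map_neg]
    ring
  rw [hfac, mul_pow, mul_pow, ← pow_mul] at hY
  set t : ℂ := (2 : ℂ) ^ ((1 : ℤ) - (k : ℤ)) with htdef
  have key : P ^ v * (PowerSeries.C (R := Polynomial ℂ) (Polynomial.C (-A)) ^ v *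
        PowerSeries.C (R := Polynomial ℂ) (Polynomial.C ((2:ℂ) ^ v)) * egf Y)
      = P ^ v * (PowerSeries.C (R := Polynomial ℂ) (Polynomial.C t) ^ v *
        (PowerSeries.X ^ (k * v) * egf E)) := by
    linear_combination PowerSeries.C (R := Polynomial ℂ) (Polynomial.C ((2:ℂ) ^ v)) * hY
      - PowerSeries.C (R := Polynomial ℂ) (Polynomial.C t) ^ v * PowerSeries.X ^ (k * v) * hE
  have hPne : P ^ v ≠ 0 := by
    apply pow_ne_zero
    intro h
    have := congrArg (PowerSeries.coeff (R := Polynomial ℂ) 1) h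
    simp [hPdef, PowerSeries.coeff_exp, Polynomial.C_eq_zero, hlam0,
      Algebra.algebraMap_eq_smul_one] at this
  have heq := mul_left_cancel₀ hPne key
  rw [← map_pow, ← map_pow, ← map_pow, ← map_pow, ← map_mul, ← map_mul] at heq
  have hc := congrArg (PowerSeries.coeff (R := Polynomial ℂ) n) heq
  rw [show n = (n - k * v) + k * v from (Nat.sub_add_cancel hn).symm] at hc
  rw [PowerSeries.coeff_C_mul, PowerSeries.coeff_C_mul, PowerSeries.coeff_X_pow_mul] at hc
  simp only [egf, PowerSeries.coeff_mk] at hc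
  set m := n - k * v with hm
  have hn' : n = m + k * v := (Nat.sub_add_cancel hn).symm
  -- turn hc into a scalar statement
  rw [Polynomial.smul_eq_C_mul, Polynomial.smul_eq_C_mul, ← mul_assoc, ← mul_assoc,
    ← map_mul, ← map_mul] at hc
  have hfacs : ((m + k * v).factorial : ℂ) ≠ 0 := by exact_mod_cast (m + k*v).factorial_ne_zero
  have hz1 : ((-A) ^ v * (2:ℂ) ^ v) ≠ 0 := by
    apply mul_ne_zero (pow_ne_zero _ (neg_ne_zero.mpr hA0)) (pow_ne_zero _ two_ne_zero)
  rw [hn']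
  have hz1' : ((-A) ^ v * (2:ℂ) ^ v) * (((m + k * v).factorial : ℂ))⁻¹ ≠ 0 :=
    mul_ne_zero hz1 (inv_ne_zero hfacs)
  have h2 : Y (m + k * v) = Polynomial.C ((((m + k * v).factorial : ℂ)) *
      ((-A) ^ v * (2:ℂ) ^ v)⁻¹ * (t ^ v * (m.factorial : ℂ)⁻¹)) * E m := by
    calc Y (m + k * v)
        = Polynomial.C ((((m + k * v).factorial : ℂ)) * ((-A) ^ v * (2:ℂ) ^ v)⁻¹) *
          (Polynomial.C ((-A) ^ v * (2:ℂ) ^ v * (((m + k * v).factorial : ℂ))⁻¹) *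
            Y (m + k * v)) := by
          rw [← mul_assoc, ← map_mul]
          rw [show (((m + k * v).factorial : ℂ)) * ((-A) ^ v * (2:ℂ) ^ v)⁻¹ *
            ((-A) ^ v * (2:ℂ) ^ v * (((m + k * v).factorial : ℂ))⁻¹) = 1 by
              field_simp; exact div_self (pow_ne_zero _ (neg_ne_zero.mpr hA0))]
          simp
      _ = _ := by rw [hc, ← mul_assoc, ← map_mul]
  rw [h2]
  congr 2
  have hdesc : ((m + k * v).descFactorial (k * v) : ℂ) * (m.factorial : ℂ)
      = ((m + k * v).factorial : ℂ) := by
    have h := Nat.factorial_mul_descFactorial (Nat.le_add_left (k*v) m)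
    rw [Nat.add_sub_cancel] at h
    rw [mul_comm]
    exact_mod_cast h
  have ht : t ^ v = (2:ℂ) ^ v / (2:ℂ) ^ (k * v) := by
    rw [htdef, ← zpow_natCast ((2:ℂ) ^ ((1:ℤ) - k)) v, ← zpow_mul]
    rw [show ((1:ℤ) - k) * v = (v : ℤ) - (k*v : ℕ) by push_cast; ring]
    rw [zpow_sub₀ two_ne_zero, zpow_natCast, zpow_natCast]
  have hmf : (m.factorial : ℂ) ≠ 0 := by exact_mod_cast m.factorial_ne_zero
  have hneg : ((-1:ℂ)) ^ v ≠ 0 := pow_ne_zero _ (by norm_num)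
  have h2kv : ((2:ℂ) ^ (k*v)) ≠ 0 := pow_ne_zero _ two_ne_zero
  rw [ht, ← hdesc, neg_pow]
  field_simp
  have hsq2 : ((-1:ℂ)) ^ v * (-1:ℂ) ^ v = 1 := by
    rw [← pow_add, ← two_mul, pow_mul]; norm_num
  linear_combination (-1 : ℂ) * hsq2
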